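/- Let D : ℝᵐ → ℝ be a function, α* its maximizer, and suppose for all α ∈ ℝᵐ and η ∈ [0,1]: D(η α* + (1-η)α) ≥ η D(α*) + (1-η) D(α) + (γ η(1-η)/(2m)) ‖α* - α‖². Then for any ρ ≥ 0 and any α, sup_{α̂} [ D(α̂) - D(α) - (ρ/(2λm²)) ‖α̂ - α‖² ] ≥ (λmγ/(λmγ + ρ)) (D(α*) - D(α)), where λ, γ, m > 0. -/

import Mathlib

open Finset

/-- Strong concavity toward the maximizer yields the key lower bound on the
penalized suboptimality supremum. -/
theorem penalized_sup_lower_bound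
    (n : ℕ) (lam γ m ρ : ℝ)
    (hlam : 0 < lam) (hγ : 0 < γ) (hm : 0 < m) (hρ : 0 ≤ ρ)
    (D : (Fin n → ℝ) → ℝ) (αstar : Fin n → ℝ)
    (hmax : ∀ α, D α ≤ D αstar)
    (hsc : ∀ α : Fin n → ℝ, ∀ η : ℝ, 0 ≤ η → η ≤ 1 →
      D (fun i => η * αstar i + (1 - η) * α i)
        ≥ η * D αstar + (1 - η) * D α
          + (γ * η * (1 - η) / (2 * m)) * ∑ i, (αstar i - α i) ^ 2) :
    ∀ α : Fin n → ℝ,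
      (lam * m * γ / (lam * m * γ + ρ)) * (D αstar - D α)
        ≤ ⨆ αhat : Fin n → ℝ,
            (D αhat - D α - (ρ / (2 * lam * m ^ 2)) * ∑ i, (αhat i - α i) ^ 2) := by
  intro α
  have hden : 0 < lam * m * γ + ρ := by positivity
  set η : ℝ := lam * m * γ / (lam * m * γ + ρ) with hηdef
  have hη0 : 0 ≤ η := by positivity
  have hη1 : η ≤ 1 := by
    rw [hηdef, div_le_one hden]; linarith
  have hηmul : η * (lam * m * γ + ρ) = lam * m * γ :=
    div_mul_cancel₀ _ (ne_of_gt hden)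
  clear_value η
  set αhat : Fin n → ℝ := fun i => η * αstar i + (1 - η) * α i with hαhat
  have hbdd : BddAbove (Set.range fun αh : Fin n → ℝ =>
      D αh - D α - (ρ / (2 * lam * m ^ 2)) * ∑ i, (αh i - α i) ^ 2) := by
    refine ⟨D αstar - D α, ?_⟩
    rintro _ ⟨β, rfl⟩
    have h1 : 0 ≤ (ρ / (2 * lam * m ^ 2)) * ∑ i, (β i - α i) ^ 2 := by positivity
    have := hmax β
    simp only
    linarith
  refine le_ciSup_of_le hbdd αhat ?_
  have hsum : ∑ i, (αhat i - α i) ^ 2 = η ^ 2 * ∑ i, (αstar i - α i) ^ 2 := by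
    rw [Finset.mul_sum]
    refine Finset.sum_congr rfl fun i _ => ?_
    simp only [hαhat]; ring
  have hS : 0 ≤ ∑ i, (αstar i - α i) ^ 2 := by positivity
  have hkey := hsc α η hη0 hη1
  rw [hsum]
  have h2 : (1 - η) * (lam * m * γ) = ρ * η := by linarith [hηmul]
  have hcoef : (ρ / (2 * lam * m ^ 2)) * η ^ 2 = γ * η * (1 - η) / (2 * m) := by
    field_simp
    linear_combination -η * h2
  nlinarith [hkey, mul_le_mul_of_nonneg_right (le_of_eq hcoef) hS]
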